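/- Let ψ₁, ψ₂ : Fin 2 × Fin 2 × Fin 2 → ℂ be the three-qubit pure states with ψ₁(0,0,1) = ψ₁(0,1,0) = 1/√2 and all other entries 0, and ψ₂(1,0,1) = ψ₂(0,1,1) = 1/√2 and all other entries 0. Then ψ₁ and ψ₂ are not SLOCC equivalent: there do not exist invertible matrices C₁, C₂, C₃ : Matrix (Fin 2) (Fin 2) ℂ such that ψ₂ (x₁,x₂,x₃) = Σ_{y₁,y₂,y₃} C₁ x₁ y₁ * C₂ x₂ y₂ * C₃ x₃ y₃ * ψ₁ (y₁,y₂,y₃) for all x₁,x₂,x₃. -/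
import Mathlib

/-- The state `|ψ₁⟩ = (|001⟩ + |010⟩)/√2`. -/
noncomputable def psi1 (x : Fin 2 × Fin 2 × Fin 2) : ℂ :=
  if x = (0, 0, 1) ∨ x = (0, 1, 0) then ((Real.sqrt 2 : ℝ) : ℂ)⁻¹ else 0

/-- The state `|ψ₂⟩ = (|101⟩ + |011⟩)/√2`. -/
noncomputable def psi2 (x : Fin 2 × Fin 2 × Fin 2) : ℂ :=
  if x = (1, 0, 1) ∨ x = (0, 1, 1) then ((Real.sqrt 2 : ℝ) : ℂ)⁻¹ else 0

/-- The three-qubit pure states `(|001⟩+|010⟩)/√2` and `(|101⟩+|011⟩)/√2` are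
not SLOCC equivalent. -/
theorem psi1_psi2_not_slocc :
    ¬ ∃ C₁ C₂ C₃ : Matrix (Fin 2) (Fin 2) ℂ,
        IsUnit C₁ ∧ IsUnit C₂ ∧ IsUnit C₃ ∧
        ∀ x₁ x₂ x₃ : Fin 2, psi2 (x₁, x₂, x₃) =
          ∑ y₁ : Fin 2, ∑ y₂ : Fin 2, ∑ y₃ : Fin 2,
            C₁ x₁ y₁ * C₂ x₂ y₂ * C₃ x₃ y₃ * psi1 (y₁, y₂, y₃) := by
  rintro ⟨C₁, C₂, C₃, _, _, _, h⟩
  have hs : ((Real.sqrt 2 : ℝ) : ℂ)⁻¹ ≠ 0 := by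
    norm_num [Real.sqrt_eq_zero']
  have h1 := h 1 0 1
  have h2 := h 0 0 1
  have h3 := h 0 1 1
  simp only [psi1, psi2, Fin.sum_univ_two] at h1 h2 h3
  norm_num [Prod.ext_iff, Fin.ext_iff] at h1 h2 h3
  have e1 : C₁ 1 0 * (C₂ 0 0 * C₃ 1 1 + C₂ 0 1 * C₃ 1 0) - 1 = 0 :=
    (mul_eq_zero.mp (by linear_combination -h1 :
      (C₁ 1 0 * (C₂ 0 0 * C₃ 1 1 + C₂ 0 1 * C₃ 1 0) - 1) * ((Real.sqrt 2 : ℝ) : ℂ)⁻¹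
        = 0)).resolve_right hs
  have e2 : C₁ 0 0 * (C₂ 0 0 * C₃ 1 1 + C₂ 0 1 * C₃ 1 0) = 0 :=
    (mul_eq_zero.mp (by linear_combination -h2 :
      (C₁ 0 0 * (C₂ 0 0 * C₃ 1 1 + C₂ 0 1 * C₃ 1 0)) * ((Real.sqrt 2 : ℝ) : ℂ)⁻¹
        = 0)).resolve_right hs
  have e3 : C₁ 0 0 * (C₂ 1 0 * C₃ 1 1 + C₂ 1 1 * C₃ 1 0) - 1 = 0 :=
    (mul_eq_zero.mp (by linear_combination -h3 :
      (C₁ 0 0 * (C₂ 1 0 * C₃ 1 1 + C₂ 1 1 * C₃ 1 0) - 1) * ((Real.sqrt 2 : ℝ) : ℂ)⁻¹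
        = 0)).resolve_right hs
  have : (0 : ℂ) = 1 := by
    linear_combination (C₁ 0 0 * (C₂ 1 0 * C₃ 1 1 + C₂ 1 1 * C₃ 1 0)) * e1
      - (C₁ 1 0 * (C₂ 1 0 * C₃ 1 1 + C₂ 1 1 * C₃ 1 0)) * e2 + e3
  simp at this
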